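/- If a finite simple graph G=(V,E) is a central-max-point tolerance graph (CMPTG), then there exists a linear order < on V such that for all vertices x<u<v<y: if xv∈E and uy∈E, then uv∈E and moreover xu∈E or vy∈E. -/

import Mathlib

variable {V : Type*}

/-- An MPT representation of a simple graph: each vertex `u` gets an interval
`[a u, b u]` with a point `p u` inside it, and distinct vertices `u, v` are adjacent
iff both `p u` and `p v` lie in the intersection of the two intervals. -/
def IsMPTRep (G : SimpleGraph V) (a b p : V → ℝ) : Prop :=
  (∀ u, a u ≤ b u) ∧ (∀ u, p u ∈ Set.Icc (a u) (b u)) ∧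
    ∀ u v : V, u ≠ v →
      (G.Adj u v ↔ p u ∈ Set.Icc (a u) (b u) ∩ Set.Icc (a v) (b v) ∧
                   p v ∈ Set.Icc (a u) (b u) ∩ Set.Icc (a v) (b v))

/-- A central-max-point tolerance graph: an MPT representation where every point is
the center of its interval. -/
def IsCMPTG (G : SimpleGraph V) : Prop :=
  ∃ a b : V → ℝ, IsMPTRep G a b (fun u => (a u + b u) / 2)

/-- If a finite simple graph is a CMPTG, then its vertices admit a linear order `<`
such that for all `x < u < v < y`, if `xv` and `uy` are edges then `uv` is an edge and
moreover `xu` or `vy` is an edge. -/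
theorem cmptg_four_point_condition [Fintype V] (G : SimpleGraph V) (hG : IsCMPTG G) :
    ∃ r : V → V → Prop, IsStrictTotalOrder V r ∧
      ∀ x u v y : V, r x u → r u v → r v y → G.Adj x v → G.Adj u y →
        G.Adj u v ∧ (G.Adj x u ∨ G.Adj v y) := by
  classical
  obtain ⟨a, b, hab, hp, hadj⟩ := hG
  set p : V → ℝ := fun u => (a u + b u) / 2 with hpdef
  have hpm : ∀ u, a u ≤ p u ∧ p u ≤ b u := by
    intro u
    have := hp u
    simpa [Set.mem_Icc] using this
  have adj_iff : ∀ u v : V, u ≠ v →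
      (G.Adj u v ↔ a v ≤ p u ∧ p u ≤ b v ∧ a u ≤ p v ∧ p v ≤ b u) := by
    intro u v huv
    rw [hadj u v huv]
    have h1 := hpm u
    have h2 := hpm v
    simp only [Set.mem_inter_iff, Set.mem_Icc]
    obtain ⟨h1a, h1b⟩ := h1
    obtain ⟨h2a, h2b⟩ := h2
    tauto
  let e := Fintype.equivFin V
  set r : V → V → Prop :=
    fun x y => p x < p y ∨ (p x = p y ∧ e x < e y) with hrdef
  have htrans : ∀ s t w, r s t → r t w → r s w := by
    rintro s t w (h1 | ⟨h1, h1'⟩) (h2 | ⟨h2, h2'⟩)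
    · exact Or.inl (h1.trans h2)
    · exact Or.inl (h2 ▸ h1)
    · exact Or.inl (h1 ▸ h2)
    · exact Or.inr ⟨h1.trans h2, h1'.trans h2'⟩
  have hirr : ∀ s, ¬ r s s := by
    rintro s (h | ⟨_, h⟩) <;> exact lt_irrefl _ h
  have hne : ∀ s t, r s t → s ≠ t := by
    rintro s t h rfl; exact hirr s h
  have hle : ∀ s t, r s t → p s ≤ p t := by
    rintro s t (h | ⟨h, _⟩)
    · exact h.le
    · exact h.le
  refine ⟨r, ?_, ?_⟩
  · refine { trichotomous := ?_, irrefl := hirr, trans := htrans }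
    intro s t
    suffices H : r s t ∨ s = t ∨ r t s by
      intro h1 h2
      rcases H with H | H | H
      · exact absurd H h1
      · exact H
      · exact absurd H h2
    rcases lt_trichotomy (p s) (p t) with h | h | h
    · exact Or.inl (Or.inl h)
    · rcases lt_trichotomy (e s) (e t) with h' | h' | h'
      · exact Or.inl (Or.inr ⟨h, h'⟩)
      · exact Or.inr (Or.inl (e.injective h'))
      · exact Or.inr (Or.inr (Or.inr ⟨h.symm, h'⟩))
    · exact Or.inr (Or.inr (Or.inl h))
  · intro x u v y hxu huv hvy hxv huy
    have hxu' := hle _ _ hxu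
    have huv' := hle _ _ huv
    have hvy' := hle _ _ hvy
    rw [adj_iff x v (hne _ _ (htrans _ _ _ hxu huv))] at hxv
    rw [adj_iff u y (hne _ _ (htrans _ _ _ huv hvy))] at huy
    obtain ⟨hxv1, hxv2, hxv3, hxv4⟩ := hxv
    obtain ⟨huy1, huy2, huy3, huy4⟩ := huy
    have hu := hpm u
    have hv := hpm v
    have hx := hpm x
    have hy := hpm y
    constructor
    · rw [adj_iff u v (hne _ _ huv)]
      exact ⟨by linarith, by linarith, by linarith, by linarith⟩
    · by_cases hc : a u ≤ p x
      · left
        rw [adj_iff x u (hne _ _ hxu)]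
        exact ⟨hc, by linarith, by linarith, by linarith⟩
      · right
        push_neg at hc
        rw [adj_iff v y (hne _ _ hvy)]
        have hbv : p y ≤ b v := by
          by_contra hbv
          push_neg at hbv
          have hpu : p u = (a u + b u) / 2 := rfl
          have hpv : p v = (a v + b v) / 2 := rfl
          linarith
        exact ⟨by linarith, by linarith, by linarith, hbv⟩
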